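/- Let f = f₁⊘f₀ be a nonconstant tropical meromorphic function with reduced representation [f₀:f₁], and let a = [a₁:a₀] ∈ TP¹ define P(x₀,x₁) = max(a₀+x₀, a₁+x₁), with scalar value a = a₀−a₁. (I) If a₁ ∈ ℝ and f⊕a ≡ f (for example a = −∞, i.e. a₀ = −∞), then P∘f = a₁ + f₁ and N(r, 1₀⊘(P∘f)) = N(r, 1₀⊘(f⊕a)). (II) If a₀ ∈ ℝ and f⊕a ≡ a (for example a = +∞, i.e. a₁ = −∞), then P∘f = a₀ + f₀ and N(r, 1₀⊘(P∘f)) = N(r, f); moreover, if additionally a₁ ∈ ℝ (so that a is finite), then N(r, 1₀⊘(f⊕a)) = 0. -/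

import Mathlib

open Filter MeasureTheory Topology
open scoped Classical

noncomputable section

namespace TropNev

/-- `f` is tropical meromorphic: continuous and piecewise linear
(affine on a small interval on each side of every point). -/
def IsTropMero (f : ℝ → ℝ) : Prop :=
  Continuous f ∧ ∀ x : ℝ, ∃ ε > (0:ℝ), ∃ sR sL : ℝ,
    (∀ t ∈ Set.Icc x (x + ε), f t = f x + sR * (t - x)) ∧
    (∀ t ∈ Set.Icc (x - ε) x, f t = f x + sL * (t - x))

/-- ω_f(x): right derivative minus left derivative. -/
def omega (f : ℝ → ℝ) (x : ℝ) : ℝ :=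
  derivWithin f (Set.Ici x) x - derivWithin f (Set.Iic x) x

/-- tropical entire: tropical meromorphic with no poles. -/
def IsTropEntire (f : ℝ → ℝ) : Prop :=
  IsTropMero f ∧ ∀ x : ℝ, 0 ≤ omega f x

/-- tropical proximity function m(r,f). -/
def prox (f : ℝ → ℝ) (r : ℝ) : ℝ := (max (f r) 0 + max (f (-r)) 0) / 2

/-- tropical counting function of poles N(r,f). -/
def countN (f : ℝ → ℝ) (r : ℝ) : ℝ :=
  (1 / 2) * ∑' b : ℝ, if |b| < r ∧ omega f b < 0 then -omega f b * (r - |b|) else 0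

/-- N(r, 1₀ ⊘ g): counting function of the roots of g. -/
def countNroots (g : ℝ → ℝ) (r : ℝ) : ℝ := countN (fun x => -g x) r

/-- tropical Nevanlinna characteristic T(r,f). -/
def charT (f : ℝ → ℝ) (r : ℝ) : ℝ := prox f r + countN f r

/-- limsup_{r→∞} h(r) = 0 (in the real-analysis sense). -/
def LimsupZero (h : ℝ → ℝ) : Prop :=
  (∀ ε : ℝ, 0 < ε → ∀ᶠ r : ℝ in atTop, h r < ε) ∧
  (∀ ε : ℝ, 0 < ε → ∃ᶠ r : ℝ in atTop, -ε < h r)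

/-- liminf_{r→∞} h(r) = 0 (in the real-analysis sense). -/
def LiminfZero (h : ℝ → ℝ) : Prop :=
  (∀ ε : ℝ, 0 < ε → ∃ᶠ r : ℝ in atTop, h r < ε) ∧
  (∀ ε : ℝ, 0 < ε → ∀ᶠ r : ℝ in atTop, -ε < h r)

/-- E ⊆ [1,∞) has zero upper density. -/
def ZeroUpperDensity (E : Set ℝ) : Prop :=
  LimsupZero fun r => (volume (E ∩ Set.Icc 1 r)).toReal / r

/-- E ⊆ [1,∞) has zero lower density. -/
def ZeroLowerDensity (E : Set ℝ) : Prop :=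
  LiminfZero fun r => (volume (E ∩ Set.Icc 1 r)).toReal / r

/-- max of finitely many reals. -/
def tmax {m : ℕ} (F : Fin (m + 1) → ℝ) : ℝ :=
  Finset.univ.sup' Finset.univ_nonempty F

/-- tropical holomorphic curve with reduced representation f₀,…,f_n :
all components tropical entire, with no common roots. -/
def IsTropCurve {n : ℕ} (f : Fin (n + 1) → ℝ → ℝ) : Prop :=
  (∀ k, IsTropEntire (f k)) ∧ ∀ x : ℝ, ∃ k, ¬ 0 < omega (f k) x

/-- tropical Cartan characteristic T_f(r). -/
def curveT {n : ℕ} (f : Fin (n + 1) → ℝ → ℝ) (r : ℝ) : ℝ :=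
  (tmax (fun k => f k r) + tmax (fun k => f k (-r))) / 2 - tmax fun k => f k 0

/-- homogeneous tropical polynomial of degree d in the variables x₀,…,x_n,
with coefficients in ℝ ∪ {−∞} indexed by the degree-d monomials
(i.e. multisets of size d over the variables), not all −∞. -/
structure TropPoly (n d : ℕ) where
  coeff : Sym (Fin (n + 1)) d → EReal
  nontriv : ∃ s, coeff s ≠ ⊥

/-- value of the monomial term c_I + i₀x₀+⋯+i_nx_n. -/
def TropPoly.term {n d : ℕ} (P : TropPoly n d) (s : Sym (Fin (n + 1)) d)
    (x : Fin (n + 1) → ℝ) : EReal :=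
  P.coeff s + (((Multiset.map x (s : Multiset (Fin (n + 1)))).sum : ℝ) : EReal)

def TropPoly.evalE {n d : ℕ} (P : TropPoly n d) (x : Fin (n + 1) → ℝ) : EReal :=
  Finset.univ.sup fun s => P.term s x

/-- the tropical hypersurface V_P : points where the maximum is attained
by at least two monomials. -/
def TropPoly.hyp {n d : ℕ} (P : TropPoly n d) : Set (Fin (n + 1) → ℝ) :=
  {x | ∃ s t : Sym (Fin (n + 1)) d, s ≠ t ∧
        P.term s x = P.evalE x ∧ P.term t x = P.evalE x}

/-- the composition P ∘ f. -/
def TropPoly.compo {n d : ℕ} (P : TropPoly n d) (f : Fin (n + 1) → ℝ → ℝ) : ℝ → ℝ :=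
  fun t => (P.evalE fun k => f k t).toReal

/-- ‖a‖ = max_I c_I for the coefficient vector of P. -/
def TropPoly.coeffNorm {n d : ℕ} (P : TropPoly n d) : ℝ :=
  (Finset.univ.sup fun s => P.coeff s).toReal

/-- tropical Weil function λ_{V_P}(f(x)) = d‖f(x)‖ + d‖a‖ − (P∘f)(x). -/
def weil {n d : ℕ} (P : TropPoly n d) (f : Fin (n + 1) → ℝ → ℝ) (x : ℝ) : ℝ :=
  d * tmax (fun k => f k x) + d * P.coeffNorm - P.compo f x

/-- proximity function m_f(r, V_P). -/
def proxCurve {n d : ℕ} (f : Fin (n + 1) → ℝ → ℝ) (P : TropPoly n d) (r : ℝ) : ℝ :=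
  (weil P f r + weil P f (-r)) / 2

/-- f is tropical algebraically nondegenerate. -/
def AlgNondeg {n : ℕ} (f : Fin (n + 1) → ℝ → ℝ) : Prop :=
  ∀ d : ℕ, 1 ≤ d → ∀ P : TropPoly n d, ∃ t : ℝ, (fun k => f k t) ∉ P.hyp

/-- f is tropical linearly nondegenerate. -/
def LinNondeg {n : ℕ} (f : Fin (n + 1) → ℝ → ℝ) : Prop :=
  ∀ P : TropPoly n 1, ∃ t : ℝ, (fun k => f k t) ∉ P.hyp

/-- Gondran–Minoux linear independence of a finite family of real functions. -/
def GMLinIndep {ι : Type*} [Fintype ι] [DecidableEq ι] (g : ι → ℝ → ℝ) : Prop :=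
  ¬ ∃ (I J : Finset ι) (a : ι → EReal),
      I.Nonempty ∧ J.Nonempty ∧ Disjoint I J ∧ I ∪ J = Finset.univ ∧
      (∃ i, a i ≠ ⊥) ∧
      ∀ x : ℝ, (I.sup fun i => a i + ((g i x : ℝ) : EReal)) =
        (J.sup fun j => a j + ((g j x : ℝ) : EReal))

/-- the degree-d tropical monomials f^I in f₀,…,f_n. -/
def monos {n : ℕ} (f : Fin (n + 1) → ℝ → ℝ) (d : ℕ) :
    Sym (Fin (n + 1)) d → ℝ → ℝ :=
  fun s x => (Multiset.map (fun k => f k x) (s : Multiset (Fin (n + 1)))).sum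

/-- Gondran–Minoux algebraic independence. -/
def GMAlgIndep {n : ℕ} (f : Fin (n + 1) → ℝ → ℝ) : Prop :=
  ∀ d : ℕ, 1 ≤ d → GMLinIndep (monos f d)

/-- F is a complete tropical linear combination of the family h :
every tropical-linear representation of F over h has all coefficients finite. -/
def TropComplete {ι : Type*} [Fintype ι] (h : ι → ℝ → ℝ) (F : ℝ → ℝ) : Prop :=
  ∀ a : ι → EReal,
    (∀ x : ℝ, ((F x : ℝ) : EReal) = Finset.univ.sup fun k => a k + ((h k x : ℝ) : EReal)) →
    ∀ k, a k ≠ ⊥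

/-- the tropical Casoratian with shift c. -/
def casorati {m : ℕ} (c : ℝ) (g : Fin (m + 1) → ℝ → ℝ) : ℝ → ℝ := fun x =>
  Finset.univ.sup' Finset.univ_nonempty
    fun π : Equiv.Perm (Fin (m + 1)) => ∑ j, g j (x + ((π j : ℕ) : ℝ) * c)

/-- tropical Cartan characteristic for a reduced representation [f₀:f₁] in TP¹. -/
def charT2 (f0 f1 : ℝ → ℝ) (r : ℝ) : ℝ :=
  (max (f0 r) (f1 r) + max (f0 (-r)) (f1 (-r))) / 2 - max (f0 0) (f1 0)

/-- reduced representation in TP¹: f₀, f₁ tropical entire with no common roots. -/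
def ReducedPair (f0 f1 : ℝ → ℝ) : Prop :=
  IsTropEntire f0 ∧ IsTropEntire f1 ∧ ∀ x : ℝ, ¬ (0 < omega f0 x ∧ 0 < omega f1 x)

/-- (P∘f)(x) = max(a₀+f₀(x), a₁+f₁(x)) for a TP¹ value [a₁:a₀]. -/
def pcomp (a0 a1 : EReal) (f0 f1 : ℝ → ℝ) : ℝ → ℝ := fun x =>
  ((a0 + ((f0 x : ℝ) : EReal)) ⊔ (a1 + ((f1 x : ℝ) : EReal))).toReal

/-- defect of a tropical holomorphic curve with respect to a tropical hypersurface. -/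
def curveDefect {n d : ℕ} (f : Fin (n + 1) → ℝ → ℝ) (P : TropPoly n d) : ℝ :=
  1 - Filter.limsup (fun r => countNroots (P.compo f) r / (d * curveT f r)) atTop

end TropNev

end


open Set in
private lemma derivWithin_Ici_of_affine {g : ℝ → ℝ} {x ε s : ℝ} (hε : 0 < ε)
    (h : ∀ t ∈ Set.Icc x (x + ε), g t = g x + s * (t - x)) :
    derivWithin g (Set.Ici x) x = s := by
  have haff : HasDerivWithinAt (fun t => g x + s * (t - x)) s (Set.Ici x) x := by
    have := (((hasDerivAt_id x).sub_const x).const_mul s).const_add (g x)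
    simpa using this.hasDerivWithinAt
  have hmem : Set.Icc x (x + ε) ∈ nhdsWithin x (Set.Ici x) := by
    rw [show Set.Icc x (x + ε) = Set.Ici x ∩ Set.Iic (x + ε) from (Set.Ici_inter_Iic).symm]
    exact inter_mem_nhdsWithin _ (Iic_mem_nhds (by linarith))
  have hg : HasDerivWithinAt g s (Set.Ici x) x := by
    apply haff.congr_of_eventuallyEq
    · filter_upwards [hmem] with t ht using h t ht
    · simpa using h x ⟨le_rfl, by linarith⟩
  exact hg.derivWithin (uniqueDiffOn_Ici x x Set.self_mem_Ici)

open Set in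
private lemma derivWithin_Iic_of_affine {g : ℝ → ℝ} {x ε s : ℝ} (hε : 0 < ε)
    (h : ∀ t ∈ Set.Icc (x - ε) x, g t = g x + s * (t - x)) :
    derivWithin g (Set.Iic x) x = s := by
  have haff : HasDerivWithinAt (fun t => g x + s * (t - x)) s (Set.Iic x) x := by
    have := (((hasDerivAt_id x).sub_const x).const_mul s).const_add (g x)
    simpa using this.hasDerivWithinAt
  have hmem : Set.Icc (x - ε) x ∈ nhdsWithin x (Set.Iic x) := by
    rw [show Set.Icc (x - ε) x = Set.Iic x ∩ Set.Ici (x - ε) from by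
      rw [Set.Iic_inter_Ici, Set.Icc]]
    exact inter_mem_nhdsWithin _ (Ici_mem_nhds (by linarith))
  have hg : HasDerivWithinAt g s (Set.Iic x) x := by
    apply haff.congr_of_eventuallyEq
    · filter_upwards [hmem] with t ht using h t ht
    · simpa using h x ⟨by linarith, le_rfl⟩
  exact hg.derivWithin (uniqueDiffOn_Iic x x Set.self_mem_Iic)

private lemma omega_slopes {g : ℝ → ℝ} {x ε sR sL : ℝ} (hε : 0 < ε)
    (hR : ∀ t ∈ Set.Icc x (x + ε), g t = g x + sR * (t - x))
    (hL : ∀ t ∈ Set.Icc (x - ε) x, g t = g x + sL * (t - x)) :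
    TropNev.omega g x = sR - sL := by
  unfold TropNev.omega
  rw [derivWithin_Ici_of_affine hε hR, derivWithin_Iic_of_affine hε hL]

private lemma omega_const (c : ℝ) (x : ℝ) : TropNev.omega (fun _ => c) x = 0 := by
  have := omega_slopes (g := fun _ => c) (x := x) (sR := 0) (sL := 0) one_pos
    (fun t _ => by ring) (fun t _ => by ring)
  simpa using this

private lemma omega_combo {f0 f1 : ℝ → ℝ} (h0 : TropNev.IsTropMero f0)
    (h1 : TropNev.IsTropMero f1) (c c0 c1 : ℝ) (x : ℝ) :
    TropNev.omega (fun t => c + c1 * f1 t + c0 * f0 t) x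
      = c1 * TropNev.omega f1 x + c0 * TropNev.omega f0 x := by
  obtain ⟨e0, he0, sR0, sL0, hR0, hL0⟩ := h0.2 x
  obtain ⟨e1, he1, sR1, sL1, hR1, hL1⟩ := h1.2 x
  set ε := min e0 e1 with hεdef
  have hε : 0 < ε := lt_min he0 he1
  have hsub0R : Set.Icc x (x + ε) ⊆ Set.Icc x (x + e0) :=
    Set.Icc_subset_Icc le_rfl (add_le_add_right (min_le_left e0 e1) x)
  have hsub1R : Set.Icc x (x + ε) ⊆ Set.Icc x (x + e1) :=
    Set.Icc_subset_Icc le_rfl (add_le_add_right (min_le_right e0 e1) x)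
  have hsub0L : Set.Icc (x - ε) x ⊆ Set.Icc (x - e0) x :=
    Set.Icc_subset_Icc (sub_le_sub_left (min_le_left e0 e1) x) le_rfl
  have hsub1L : Set.Icc (x - ε) x ⊆ Set.Icc (x - e1) x :=
    Set.Icc_subset_Icc (sub_le_sub_left (min_le_right e0 e1) x) le_rfl
  have h00 : TropNev.omega f0 x = sR0 - sL0 :=
    omega_slopes hε (fun t ht => hR0 t (hsub0R ht)) (fun t ht => hL0 t (hsub0L ht))
  have h11 : TropNev.omega f1 x = sR1 - sL1 :=
    omega_slopes hε (fun t ht => hR1 t (hsub1R ht)) (fun t ht => hL1 t (hsub1L ht))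
  have hg : TropNev.omega (fun t => c + c1 * f1 t + c0 * f0 t) x
      = (c1 * sR1 + c0 * sR0) - (c1 * sL1 + c0 * sL0) := by
    apply omega_slopes hε
    · intro t ht
      rw [hR0 t (hsub0R ht), hR1 t (hsub1R ht)]; ring
    · intro t ht
      rw [hL0 t (hsub0L ht), hL1 t (hsub1L ht)]; ring
  rw [hg, h00, h11]; ring

private lemma summand_eq {r b : ℝ} {u v : ℝ} (huv : u < 0 ↔ v < 0) (hval : u < 0 → u = v) :
    (if |b| < r ∧ u < 0 then -u * (r - |b|) else 0)
      = (if |b| < r ∧ v < 0 then -v * (r - |b|) else 0) := by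
  by_cases h : u < 0
  · rw [hval h]
  · simp [h, (huv.not.mp h : ¬ v < 0)]


open TropNev Filter MeasureTheory Topology
/-- special cases f⊕a ≡ f and f⊕a ≡ a. -/
theorem stmt12 (f0 f1 : ℝ → ℝ) (hred : ReducedPair f0 f1)
    (f : ℝ → ℝ) (hfdef : f = fun x => f1 x - f0 x)
    (hnc : ¬ ∃ k : ℝ, ∀ x : ℝ, f x = k) :
    (∀ (a1 : ℝ) (a0 : EReal), a0 ≠ ⊤ →
      (∀ x : ℝ, ((f x : ℝ) : EReal) ⊔ (a0 - (a1 : EReal)) = ((f x : ℝ) : EReal)) →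
      (∀ x : ℝ, pcomp a0 (a1 : EReal) f0 f1 x = a1 + f1 x) ∧
      ∀ r : ℝ, countNroots (pcomp a0 (a1 : EReal) f0 f1) r =
        countNroots (fun x => (((f x : ℝ) : EReal) ⊔ (a0 - (a1 : EReal))).toReal) r) ∧
    (∀ (a0 : ℝ) (a1 : EReal), a1 ≠ ⊤ →
      (∀ x : ℝ, ((f x : ℝ) : EReal) ⊔ ((a0 : EReal) - a1) = (a0 : EReal) - a1) →
      (∀ x : ℝ, pcomp (a0 : EReal) a1 f0 f1 x = a0 + f0 x) ∧
      (∀ r : ℝ, countNroots (pcomp (a0 : EReal) a1 f0 f1) r = countN f r) ∧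
      (∀ b : ℝ, a1 = (b : ℝ) → ∀ r : ℝ,
        countNroots (fun x => (((f x : ℝ) : EReal) ⊔ ((a0 : EReal) - a1)).toReal) r
          = 0)) := by
  obtain ⟨⟨hm0, hw0⟩, ⟨hm1, hw1⟩, hncom⟩ := hred
  constructor
  · -- Part I
    intro a1 a0 ha0top hsup
    have key : ∀ x : ℝ, pcomp a0 (a1 : EReal) f0 f1 x = a1 + f1 x := by
      intro x
      have hle : a0 + ((f0 x : ℝ) : EReal) ≤ (a1 : EReal) + ((f1 x : ℝ) : EReal) := by
        induction a0 with
        | bot => simp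
        | coe c =>
          have h2 : ((c : EReal) - (a1 : EReal)) ≤ ((f x : ℝ) : EReal) := by
            rw [← hsup x]; exact le_sup_right
          rw [show ((c : EReal) - (a1 : EReal)) = ((c - a1 : ℝ) : EReal) from
            (EReal.coe_sub c a1)] at h2
          have hr : c - a1 ≤ f x := EReal.coe_le_coe_iff.mp h2
          rw [hfdef] at hr
          simp only at hr
          rw [show ((c : EReal) + ((f0 x : ℝ) : EReal)) = ((c + f0 x : ℝ) : EReal) from
              (EReal.coe_add _ _).symm,
            show (((a1 : ℝ) : EReal) + ((f1 x : ℝ) : EReal)) = ((a1 + f1 x : ℝ) : EReal) from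
              (EReal.coe_add _ _).symm]
          exact EReal.coe_le_coe_iff.mpr (by linarith)
        | top => exact absurd rfl ha0top
      unfold pcomp
      rw [sup_eq_right.mpr hle,
        show (((a1 : ℝ) : EReal) + ((f1 x : ℝ) : EReal)) = ((a1 + f1 x : ℝ) : EReal) from
          (EReal.coe_add _ _).symm, EReal.toReal_coe]
    refine ⟨key, ?_⟩
    intro r
    simp only [countNroots, countN]
    congr 1
    refine tsum_congr fun b => ?_
    have hg1 : (fun x => -pcomp a0 (a1 : EReal) f0 f1 x)
        = fun t => (-a1) + (-1) * f1 t + 0 * f0 t :=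
      funext fun t => by rw [key t]; ring
    have hg2 : (fun x => -(((f x : ℝ) : EReal) ⊔ (a0 - (a1 : EReal))).toReal)
        = fun t => (0 : ℝ) + (-1) * f1 t + 1 * f0 t := by
      funext t
      rw [hsup t, EReal.toReal_coe, hfdef]
      simp only
      ring
    rw [hg1, hg2, omega_combo hm0 hm1, omega_combo hm0 hm1]
    have w0 := hw0 b; have w1 := hw1 b
    have key0 : 0 < omega f1 b → omega f0 b = 0 := fun h1 => by
      by_contra hh; exact hncom b ⟨lt_of_le_of_ne w0 (Ne.symm hh), h1⟩
    apply summand_eq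
    · constructor
      · intro h
        have h1 : 0 < omega f1 b := by linarith
        have h0 := key0 h1
        linarith
      · intro h
        have h1 : 0 < omega f1 b := by linarith
        linarith
    · intro h
      have h1 : 0 < omega f1 b := by linarith
      rw [key0 h1]; ring
  · -- Part II
    intro a0 a1 ha1top hsup
    have key : ∀ x : ℝ, pcomp (a0 : EReal) a1 f0 f1 x = a0 + f0 x := by
      intro x
      have hle : a1 + ((f1 x : ℝ) : EReal) ≤ ((a0 : ℝ) : EReal) + ((f0 x : ℝ) : EReal) := by
        induction a1 with
        | bot => simp
        | coe c =>
          have h2 : ((f x : ℝ) : EReal) ≤ ((a0 : EReal) - (c : EReal)) := by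
            rw [← hsup x]; exact le_sup_left
          rw [show ((a0 : EReal) - (c : EReal)) = ((a0 - c : ℝ) : EReal) from
            (EReal.coe_sub a0 c)] at h2
          have hr : f x ≤ a0 - c := EReal.coe_le_coe_iff.mp h2
          rw [hfdef] at hr
          simp only at hr
          rw [show (((c : ℝ) : EReal) + ((f1 x : ℝ) : EReal)) = ((c + f1 x : ℝ) : EReal) from
              (EReal.coe_add _ _).symm,
            show (((a0 : ℝ) : EReal) + ((f0 x : ℝ) : EReal)) = ((a0 + f0 x : ℝ) : EReal) from
              (EReal.coe_add _ _).symm]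
          exact EReal.coe_le_coe_iff.mpr (by linarith)
        | top => exact absurd rfl ha1top
      unfold pcomp
      rw [sup_eq_left.mpr hle,
        show (((a0 : ℝ) : EReal) + ((f0 x : ℝ) : EReal)) = ((a0 + f0 x : ℝ) : EReal) from
          (EReal.coe_add _ _).symm, EReal.toReal_coe]
    refine ⟨key, ?_, ?_⟩
    · intro r
      simp only [countNroots, countN]
      congr 1
      refine tsum_congr fun b => ?_
      have hg1 : (fun x => -pcomp (a0 : EReal) a1 f0 f1 x)
          = fun t => (-a0) + 0 * f1 t + (-1) * f0 t :=
        funext fun t => by rw [key t]; ring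
      have hg2 : f = fun t => (0 : ℝ) + 1 * f1 t + (-1) * f0 t := by
        rw [hfdef]; funext t; show f1 t - f0 t = _; ring
      rw [hg1, hg2, omega_combo hm0 hm1, omega_combo hm0 hm1]
      have w0 := hw0 b; have w1 := hw1 b
      have key0 : 0 < omega f0 b → omega f1 b = 0 := fun h0 => by
        by_contra hh; exact hncom b ⟨h0, lt_of_le_of_ne w1 (Ne.symm hh)⟩
      apply summand_eq
      · constructor
        · intro h
          have h0 : 0 < omega f0 b := by linarith
          have h1 := key0 h0
          linarith
        · intro h
          have h0 : 0 < omega f0 b := by linarith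
          linarith
      · intro h
        have h0 : 0 < omega f0 b := by linarith
        rw [key0 h0]; ring
    · intro b hb r
      subst hb
      have hconst : (fun x => (((f x : ℝ) : EReal) ⊔ ((a0 : EReal) - ((b : ℝ) : EReal))).toReal)
          = fun _ => (a0 - b : ℝ) := by
        funext x
        rw [hsup x, show ((a0 : EReal) - (b : EReal)) = ((a0 - b : ℝ) : EReal) from
          (EReal.coe_sub a0 b), EReal.toReal_coe]
      rw [hconst]
      simp only [countNroots, countN]
      have : ∀ β : ℝ, omega (fun _ : ℝ => -(a0 - b : ℝ)) β = 0 := fun β => omega_const _ β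
      simp [omega_const]
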